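/- In ZM(m,n,r), if the subgroup H_{(m₁,n₁,s)} = ⟨a^{m₁}, b^{n₁}a^{s}⟩ (with m₁ | m, n₁ | n, 0 ≤ s < m₁, and m₁ | s·(r^n−1)/(r^{n₁}−1)) is normal in ZM(m,n,r), then s = 0 and m₁ divides r^{n₁} − 1. -/

import Mathlib

def ZMrels (m n : ℕ) (r : ℤ) : Set (FreeGroup Bool) :=
  {FreeGroup.of true ^ m, FreeGroup.of false ^ n,
   (FreeGroup.of false)⁻¹ * FreeGroup.of true * FreeGroup.of false * (FreeGroup.of true) ^ (-r)}

abbrev ZM (m n : ℕ) (r : ℤ) : Type := PresentedGroup (ZMrels m n r)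

def ZMa (m n : ℕ) (r : ℤ) : ZM m n r := PresentedGroup.of true

def ZMb (m n : ℕ) (r : ℤ) : ZM m n r := PresentedGroup.of false

def unitAut {R : Type*} [Semiring R] : Rˣ →* MulAut (Multiplicative R) where
  toFun w := AddEquiv.toMultiplicative (AddAut.mulLeft w)
  map_one' := by ext x; simp; rfl
  map_mul' a b := by ext x; simp [mul_assoc]; rfl

@[simp] lemma unitAut_apply {R : Type*} [Semiring R] (w : Rˣ) (x : R) :
    unitAut w (Multiplicative.ofAdd x) = Multiplicative.ofAdd ((w : R) * x) := rfl

def chiHom (m₁ n : ℕ) (u : (ZMod m₁)ˣ) (hun : u ^ n = 1) :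
    Multiplicative (ZMod n) →* (ZMod m₁)ˣ :=
  AddMonoidHom.toMultiplicativeLeft
    (ZMod.lift n ⟨zmultiplesHom (Additive (ZMod m₁)ˣ) (Additive.ofMul u⁻¹), by
      simp only [zmultiplesHom_apply, ← ofMul_zpow]
      norm_cast
      simp [inv_pow, hun]⟩)

lemma chiHom_intCast (m₁ n : ℕ) (u : (ZMod m₁)ˣ) (hun : u ^ n = 1) (k : ℤ) :
    chiHom m₁ n u hun (Multiplicative.ofAdd ((k : ZMod n))) = u⁻¹ ^ k := by
  simp [chiHom, ZMod.lift_coe]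

def myphi (m₁ n : ℕ) (u : (ZMod m₁)ˣ) (hun : u ^ n = 1) :
    Multiplicative (ZMod n) →* MulAut (Multiplicative (ZMod m₁)) :=
  unitAut.comp (chiHom m₁ n u hun)

@[simp] lemma myphi_apply (m₁ n : ℕ) (u : (ZMod m₁)ˣ) (hun : u ^ n = 1) (k : ℤ) (x : ZMod m₁) :
    myphi m₁ n u hun (Multiplicative.ofAdd ((k : ZMod n))) (Multiplicative.ofAdd x)
      = Multiplicative.ofAdd (((u⁻¹ ^ k : (ZMod m₁)ˣ) : ZMod m₁) * x) := by
  simp only [myphi, MonoidHom.comp_apply, chiHom_intCast, unitAut_apply]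

@[simp] lemma myphi_apply_nat (m₁ n : ℕ) (u : (ZMod m₁)ˣ) (hun : u ^ n = 1) (k : ℕ)
    (x : ZMod m₁) :
    myphi m₁ n u hun (Multiplicative.ofAdd ((k : ZMod n))) (Multiplicative.ofAdd x)
      = Multiplicative.ofAdd (((u⁻¹ ^ k : (ZMod m₁)ˣ) : ZMod m₁) * x) := by
  have h := myphi_apply m₁ n u hun (k : ℤ) x
  rw [zpow_natCast] at h
  rw [show ((k : ℤ) : ZMod n) = (k : ZMod n) by push_cast; rfl] at h
  exact h

@[simp] lemma myphi_inv_apply_nat (m₁ n : ℕ) (u : (ZMod m₁)ˣ) (hun : u ^ n = 1) (k : ℕ)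
    (x : ZMod m₁) :
    (myphi m₁ n u hun (Multiplicative.ofAdd ((k : ZMod n))))⁻¹ (Multiplicative.ofAdd x)
      = Multiplicative.ofAdd (((u ^ k : (ZMod m₁)ˣ) : ZMod m₁) * x) := by
  rw [← map_inv, ← ofAdd_neg, show -((k : ℕ) : ZMod n) = ((-(k : ℤ) : ℤ) : ZMod n) by
    push_cast; ring, myphi_apply]
  rw [show u⁻¹ ^ (-(k : ℤ)) = u ^ k by rw [zpow_neg, ← inv_zpow, inv_inv, zpow_natCast]]

@[simp] lemma myphi_apply_one (m₁ n : ℕ) (u : (ZMod m₁)ˣ) (hun : u ^ n = 1) (x : ZMod m₁) :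
    myphi m₁ n u hun (Multiplicative.ofAdd (1 : ZMod n)) (Multiplicative.ofAdd x)
      = Multiplicative.ofAdd (((u⁻¹ : (ZMod m₁)ˣ) : ZMod m₁) * x) := by
  have h := myphi_apply_nat m₁ n u hun 1 x
  rw [Nat.cast_one, pow_one] at h
  exact h

@[simp] lemma myphi_inv_apply_one (m₁ n : ℕ) (u : (ZMod m₁)ˣ) (hun : u ^ n = 1) (x : ZMod m₁) :
    (myphi m₁ n u hun (Multiplicative.ofAdd (1 : ZMod n)))⁻¹ (Multiplicative.ofAdd x)
      = Multiplicative.ofAdd (((u : (ZMod m₁)ˣ) : ZMod m₁) * x) := by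
  have h := myphi_inv_apply_nat m₁ n u hun 1 x
  rw [Nat.cast_one, pow_one] at h
  exact h

theorem stmt4 (m n : ℕ) (r : ℤ) (hm : 0 < m) (hn : 0 < n)
    (hco : Nat.Coprime m n) (hco2 : IsCoprime (m : ℤ) (r - 1))
    (hr : (m : ℤ) ∣ r ^ n - 1)
    (m₁ n₁ s : ℕ) (hm1 : m₁ ∣ m) (hn1 : n₁ ∣ n) (hs : s < m₁)
    (hL : (m₁ : ℤ) ∣ (s : ℤ) * ∑ i ∈ Finset.range (n / n₁), r ^ (n₁ * i))
    (hN : (Subgroup.closure {ZMa m n r ^ m₁, ZMb m n r ^ n₁ * ZMa m n r ^ s} :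
      Subgroup (ZM m n r)).Normal) :
    s = 0 ∧ (m₁ : ℤ) ∣ r ^ n₁ - 1 := by
  have hm₁pos : 0 < m₁ := Nat.pos_of_dvd_of_pos hm1 hm
  have hn₁pos : 0 < n₁ := Nat.pos_of_dvd_of_pos hn1 hn
  haveI : NeZero m₁ := ⟨hm₁pos.ne'⟩
  haveI : NeZero n := ⟨hn.ne'⟩
  have hm₁r : (m₁ : ℤ) ∣ r ^ n - 1 := dvd_trans (Int.natCast_dvd_natCast.mpr hm1) hr
  have hrn : ((r : ZMod m₁)) ^ n = 1 := by
    have h0 := (ZMod.intCast_zmod_eq_zero_iff_dvd _ m₁).mpr hm₁r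
    push_cast at h0
    rw [sub_eq_zero] at h0
    exact h0
  set u : (ZMod m₁)ˣ :=
    ⟨(r : ZMod m₁), (r : ZMod m₁) ^ (n - 1),
     by rw [← pow_succ', Nat.sub_add_cancel hn]; exact hrn,
     by rw [← pow_succ, Nat.sub_add_cancel hn]; exact hrn⟩ with hu
  have huval : (u : ZMod m₁) = (r : ZMod m₁) := rfl
  have hun : u ^ n = 1 := by
    ext
    rw [Units.val_pow_eq_pow_val, huval, hrn, Units.val_one]
  -- the concrete semidirect product model
  let A : Multiplicative (ZMod m₁) ⋊[myphi m₁ n u hun] Multiplicative (ZMod n) :=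
    SemidirectProduct.inl (Multiplicative.ofAdd (1 : ZMod m₁))
  let B : Multiplicative (ZMod m₁) ⋊[myphi m₁ n u hun] Multiplicative (ZMod n) :=
    SemidirectProduct.inr (Multiplicative.ofAdd (1 : ZMod n))
  have hApow : ∀ k : ℕ, A ^ k = SemidirectProduct.inl (Multiplicative.ofAdd ((k : ZMod m₁))) := by
    intro k
    rw [show A = SemidirectProduct.inl (Multiplicative.ofAdd (1 : ZMod m₁)) from rfl, ← map_pow,
      ← ofAdd_nsmul]
    norm_num
  have hBpow : ∀ k : ℕ, B ^ k = SemidirectProduct.inr (Multiplicative.ofAdd ((k : ZMod n))) := by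
    intro k
    rw [show B = SemidirectProduct.inr (Multiplicative.ofAdd (1 : ZMod n)) from rfl, ← map_pow,
      ← ofAdd_nsmul]
    norm_num
  have hAzpow : ∀ k : ℤ, A ^ k = SemidirectProduct.inl (Multiplicative.ofAdd ((k : ZMod m₁))) := by
    intro k
    rw [show A = SemidirectProduct.inl (Multiplicative.ofAdd (1 : ZMod m₁)) from rfl, ← map_zpow,
      ← ofAdd_zsmul]
    norm_num
  have hrels : ∀ ρ ∈ ZMrels m n r, FreeGroup.lift (fun x => cond x A B) ρ = 1 := by
    intro ρ hρ
    simp only [ZMrels, Set.mem_insert_iff, Set.mem_singleton_iff] at hρ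
    rcases hρ with rfl | rfl | rfl
    · rw [map_pow, FreeGroup.lift_apply_of]
      show A ^ m = 1
      rw [hApow, (ZMod.natCast_eq_zero_iff m m₁).mpr hm1]
      simp
    · rw [map_pow, FreeGroup.lift_apply_of]
      show B ^ n = 1
      rw [hBpow, ZMod.natCast_self]
      simp
    · simp only [map_mul, map_inv, map_zpow, FreeGroup.lift_apply_of]
      show B⁻¹ * A * B * A ^ (-r) = 1
      rw [hAzpow]
      have e1 : B⁻¹ * A * B
          = SemidirectProduct.inl ((myphi m₁ n u hun (Multiplicative.ofAdd (1 : ZMod n)))⁻¹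
              (Multiplicative.ofAdd (1 : ZMod m₁))) := by
        have hBinv : B⁻¹ = SemidirectProduct.inr (φ := myphi m₁ n u hun)
            (Multiplicative.ofAdd (1 : ZMod n))⁻¹ :=
          (map_inv (SemidirectProduct.inr :
            Multiplicative (ZMod n) →*
              Multiplicative (ZMod m₁) ⋊[myphi m₁ n u hun] Multiplicative (ZMod n)) _).symm
        rw [hBinv, show B = SemidirectProduct.inr (Multiplicative.ofAdd (1 : ZMod n)) from rfl,
          show A = SemidirectProduct.inl (Multiplicative.ofAdd (1 : ZMod m₁)) from rfl]
        exact (SemidirectProduct.inl_aut_inv _ _).symm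
      have e2 : (myphi m₁ n u hun (Multiplicative.ofAdd (1 : ZMod n)))⁻¹
          (Multiplicative.ofAdd (1 : ZMod m₁)) = Multiplicative.ofAdd ((r : ZMod m₁)) := by
        rw [← map_inv, ← ofAdd_neg,
          show -(1 : ZMod n) = ((-1 : ℤ) : ZMod n) by push_cast; ring,
          myphi_apply]
        simp [huval]
      have e3 : (SemidirectProduct.inl (Multiplicative.ofAdd ((r : ZMod m₁))) :
            Multiplicative (ZMod m₁) ⋊[myphi m₁ n u hun] Multiplicative (ZMod n)) *
          SemidirectProduct.inl (Multiplicative.ofAdd (((-r : ℤ) : ZMod m₁))) = 1 := by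
        rw [← map_mul, ← ofAdd_add,
          show (r : ZMod m₁) + ((-r : ℤ) : ZMod m₁) = 0 by push_cast; ring]
        simp
      rw [e1, e2, e3]
  let F : ZM m n r →*
      Multiplicative (ZMod m₁) ⋊[myphi m₁ n u hun] Multiplicative (ZMod n) :=
    PresentedGroup.toGroup hrels
  have hFa : F (ZMa m n r) = A := PresentedGroup.toGroup.of hrels
  have hFb : F (ZMb m n r) = B := PresentedGroup.toGroup.of hrels
  have hFsurj : Function.Surjective F := by
    intro x
    refine ⟨ZMa m n r ^ (x.left.toAdd).val * ZMb m n r ^ (x.right.toAdd).val, ?_⟩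
    rw [map_mul, map_pow, map_pow, hFa, hFb, hApow, hBpow, ZMod.natCast_zmod_val,
      ZMod.natCast_zmod_val]
    simp only [ofAdd_toAdd]
    exact SemidirectProduct.inl_left_mul_inr_right x
  set cc : ZMod m₁ := ((u⁻¹ ^ n₁ : (ZMod m₁)ˣ) : ZMod m₁) with hcc
  set v : ZMod m₁ := ((u ^ n₁ : (ZMod m₁)ˣ) : ZMod m₁) with hv
  have hccv : cc * v = 1 := by
    rw [hcc, hv, ← Units.val_mul, inv_pow, inv_mul_cancel, Units.val_one]
  set g : Multiplicative (ZMod m₁) ⋊[myphi m₁ n u hun] Multiplicative (ZMod n) :=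
    B ^ n₁ * A ^ s with hgdef
  have hg2 : g = SemidirectProduct.inr (Multiplicative.ofAdd ((n₁ : ZMod n))) *
      SemidirectProduct.inl (Multiplicative.ofAdd ((s : ZMod m₁))) := by
    rw [hgdef, hApow, hBpow]
  have hx2 : A * g * A⁻¹ * g⁻¹ =
      SemidirectProduct.inl (Multiplicative.ofAdd (1 - cc)) := by
    rw [hg2, show A = SemidirectProduct.inl (Multiplicative.ofAdd (1 : ZMod m₁)) from rfl]
    refine SemidirectProduct.ext ?_ ?_
    · simp only [SemidirectProduct.mul_left, SemidirectProduct.mul_right,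
        SemidirectProduct.inv_left, SemidirectProduct.inv_right, SemidirectProduct.left_inl,
        SemidirectProduct.right_inl, SemidirectProduct.left_inr, SemidirectProduct.right_inr,
        one_mul, mul_one, inv_one, map_one, map_inv, map_mul, MulAut.one_apply,
        MulAut.apply_inv_self, myphi_apply_nat, myphi_inv_apply_nat, myphi_apply_one,
        myphi_inv_apply_one]
      simp only [← ofAdd_neg, ← ofAdd_add]
      refine congrArg Multiplicative.ofAdd ?_
      push_cast
      rw [hcc, Units.val_pow_eq_pow_val]
      have h1 : ((u⁻¹ : (ZMod m₁)ˣ) : ZMod m₁) ^ n₁ * ((r : ZMod m₁)) ^ n₁ = 1 := by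
        rw [← mul_pow, show ((u⁻¹ : (ZMod m₁)ˣ) : ZMod m₁) * ((r : ZMod m₁)) = 1 from by
          rw [← huval, ← Units.val_mul, inv_mul_cancel, Units.val_one], one_pow]
      linear_combination (-(((u⁻¹ : (ZMod m₁)ˣ) : ZMod m₁) ^ n₁ * (s : ZMod m₁))) * h1
    · simp only [SemidirectProduct.mul_right, SemidirectProduct.inv_right,
        SemidirectProduct.right_inl, SemidirectProduct.right_inr, one_mul, mul_one, inv_one]
      group
  have hx1 : B * g * B⁻¹ * g⁻¹ =
      SemidirectProduct.inl (Multiplicative.ofAdd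
        (cc * (s : ZMod m₁) * (((u⁻¹ : (ZMod m₁)ˣ) : ZMod m₁) - 1))) := by
    rw [hg2, show B = SemidirectProduct.inr (Multiplicative.ofAdd (1 : ZMod n)) from rfl]
    refine SemidirectProduct.ext ?_ ?_
    · simp only [SemidirectProduct.mul_left, SemidirectProduct.mul_right,
        SemidirectProduct.inv_left, SemidirectProduct.inv_right, SemidirectProduct.left_inl,
        SemidirectProduct.right_inl, SemidirectProduct.left_inr, SemidirectProduct.right_inr,
        one_mul, mul_one, inv_one, map_one, map_inv, map_mul, MulAut.one_apply,
        MulAut.apply_inv_self, MulAut.mul_apply, myphi_apply_nat, myphi_inv_apply_nat,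
        myphi_apply_one, myphi_inv_apply_one]
      simp only [← ofAdd_neg, ← ofAdd_add]
      refine congrArg Multiplicative.ofAdd ?_
      rw [hcc]
      have h2 : ((u⁻¹ ^ n₁ : (ZMod m₁)ˣ) : ZMod m₁) * ((u ^ n₁ : (ZMod m₁)ˣ) : ZMod m₁) = 1 := by
        rw [← Units.val_mul, inv_pow, inv_mul_cancel, Units.val_one]
      have h3 : ((u⁻¹ : (ZMod m₁)ˣ) : ZMod m₁) * (r : ZMod m₁) = 1 := by
        rw [← huval, ← Units.val_mul, inv_mul_cancel, Units.val_one]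
      linear_combination
        (-(((u⁻¹ : (ZMod m₁)ˣ) : ZMod m₁) * (r : ZMod m₁) *
          ((u⁻¹ ^ n₁ : (ZMod m₁)ˣ) : ZMod m₁) * (s : ZMod m₁))) * h2 +
        (-(((u⁻¹ ^ n₁ : (ZMod m₁)ˣ) : ZMod m₁) * (s : ZMod m₁))) * h3
    · simp only [SemidirectProduct.mul_right, SemidirectProduct.inv_right,
        SemidirectProduct.right_inl, SemidirectProduct.right_inr, one_mul, mul_one, inv_one,
        zpow_neg, zpow_one, ← ofAdd_neg, ← ofAdd_add, ← ofAdd_zero (α := ZMod n)]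
      exact congrArg Multiplicative.ofAdd (by ring)
  have hgpow : ∀ j : ℕ, g ^ j =
      ⟨Multiplicative.ofAdd (cc ^ j * ((s : ZMod m₁) * ∑ i ∈ Finset.range j, v ^ i)),
        Multiplicative.ofAdd (((j * n₁ : ℕ) : ZMod n))⟩ := by
    intro j
    induction j with
    | zero => refine SemidirectProduct.ext ?_ ?_ <;> simp
    | succ j ih =>
      rw [pow_succ', ih, hg2]
      refine SemidirectProduct.ext ?_ ?_
      · simp only [SemidirectProduct.mul_left, SemidirectProduct.mul_right,
          SemidirectProduct.left_inl, SemidirectProduct.right_inl, SemidirectProduct.left_inr,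
          SemidirectProduct.right_inr, one_mul, mul_one, map_mul, MulAut.mul_apply,
          myphi_apply_nat, myphi_apply_one]
        simp only [← ofAdd_add]
        refine congrArg Multiplicative.ofAdd ?_
        rw [← hcc]
        have hpowj : cc ^ j * v ^ j = 1 := by
          rw [hcc, hv, ← Units.val_pow_eq_pow_val, ← Units.val_pow_eq_pow_val, ← Units.val_mul,
            show (u⁻¹ ^ n₁) ^ j * (u ^ n₁) ^ j = 1 from by group, Units.val_one]
        rw [Finset.sum_range_succ]
        linear_combination (-(cc * (s : ZMod m₁))) * hpowj
      · simp only [SemidirectProduct.mul_right, SemidirectProduct.right_inl,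
          SemidirectProduct.right_inr, one_mul, mul_one, ← ofAdd_add]
        refine congrArg Multiplicative.ofAdd ?_
        push_cast
        ring
  have hLz : (s : ZMod m₁) * ∑ i ∈ Finset.range (n / n₁), v ^ i = 0 := by
    have h0 := (ZMod.intCast_zmod_eq_zero_iff_dvd _ m₁).mpr hL
    push_cast at h0
    rw [show (∑ i ∈ Finset.range (n / n₁), v ^ i)
        = ∑ i ∈ Finset.range (n / n₁), ((r : ZMod m₁)) ^ (n₁ * i) from
      Finset.sum_congr rfl fun i _ => by
        rw [hv, ← Units.val_pow_eq_pow_val, ← pow_mul, Units.val_pow_eq_pow_val, huval]]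
    exact h0
  have hgN : g ^ (n / n₁) = 1 := by
    rw [hgpow]
    refine SemidirectProduct.ext ?_ ?_
    · simp [hLz]
    · simp [Nat.div_mul_cancel hn1]
  have hker : ∀ x ∈ Subgroup.zpowers g, SemidirectProduct.rightHom x = 1 → x = 1 := by
    intro x hx hx1
    obtain ⟨j, rfl⟩ := Subgroup.mem_zpowers_iff.mp hx
    rw [map_zpow] at hx1
    have hrg : SemidirectProduct.rightHom g = Multiplicative.ofAdd ((n₁ : ZMod n)) := by
      rw [hg2]; simp
    rw [hrg, ← ofAdd_zsmul] at hx1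
    have h0 : ((j * (n₁ : ℤ) : ℤ) : ZMod n) = 0 := by
      have := congrArg Multiplicative.toAdd hx1
      simpa [zsmul_eq_mul] using this
    have hdvd : (n : ℤ) ∣ j * n₁ := (ZMod.intCast_zmod_eq_zero_iff_dvd _ n).mp h0
    have hdvd2 : ((n / n₁ : ℕ) : ℤ) ∣ j := by
      have hnn : (n : ℤ) = ((n / n₁ : ℕ) : ℤ) * (n₁ : ℤ) := by
        rw [← Nat.cast_mul, Nat.div_mul_cancel hn1]
      rw [hnn] at hdvd
      exact (mul_dvd_mul_iff_right (by exact_mod_cast hn₁pos.ne' : (n₁ : ℤ) ≠ 0)).mp hdvd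
    obtain ⟨t, rfl⟩ := hdvd2
    rw [zpow_mul, zpow_natCast, hgN, one_zpow]
  set K : Subgroup (Multiplicative (ZMod m₁) ⋊[myphi m₁ n u hun] Multiplicative (ZMod n)) :=
    Subgroup.map F (Subgroup.closure {ZMa m n r ^ m₁, ZMb m n r ^ n₁ * ZMa m n r ^ s}) with hK
  have hKnormal : K.Normal := Subgroup.Normal.map hN F hFsurj
  have hFg : F (ZMb m n r ^ n₁ * ZMa m n r ^ s) = g := by
    rw [map_mul, map_pow, map_pow, hFa, hFb, hgdef]
  have hgmem : g ∈ K := by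
    rw [← hFg]
    exact Subgroup.mem_map_of_mem F (Subgroup.subset_closure (by simp))
  have hKle : K ≤ Subgroup.zpowers g := by
    rw [hK, MonoidHom.map_closure]
    refine (Subgroup.closure_le _).mpr ?_
    rw [Set.image_insert_eq, Set.image_singleton]
    rintro x hx
    simp only [Set.mem_insert_iff, Set.mem_singleton_iff] at hx
    rcases hx with rfl | rfl
    · have h1 : F (ZMa m n r ^ m₁) = 1 := by
        rw [map_pow, hFa, hApow, ZMod.natCast_self]
        simp
      rw [h1]
      exact Subgroup.one_mem _
    · rw [hFg]
      exact Subgroup.mem_zpowers g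
  -- the two commutators are trivial
  have hc2 : A * g * A⁻¹ * g⁻¹ = 1 := by
    refine hker _ (hKle (mul_mem (hKnormal.conj_mem g hgmem A) (inv_mem hgmem))) ?_
    rw [hx2, SemidirectProduct.rightHom_inl]
  have hc1 : B * g * B⁻¹ * g⁻¹ = 1 := by
    refine hker _ (hKle (mul_mem (hKnormal.conj_mem g hgmem B) (inv_mem hgmem))) ?_
    rw [hx1, SemidirectProduct.rightHom_inl]
  have hcc1 : cc = 1 := by
    rw [hx2] at hc2
    have := SemidirectProduct.inl_injective (φ := myphi m₁ n u hun)
      (by rw [hc2, map_one] : SemidirectProduct.inl (Multiplicative.ofAdd (1 - cc)) =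
        SemidirectProduct.inl (1 : Multiplicative (ZMod m₁)))
    have h2 : (1 : ZMod m₁) - cc = 0 := by
      simpa using congrArg Multiplicative.toAdd this
    exact (sub_eq_zero.mp h2).symm
  have e : cc * (s : ZMod m₁) * (((u⁻¹ : (ZMod m₁)ˣ) : ZMod m₁) - 1) = 0 := by
    rw [hx1] at hc1
    have := SemidirectProduct.inl_injective (φ := myphi m₁ n u hun)
      (by rw [hc1, map_one] : SemidirectProduct.inl (Multiplicative.ofAdd
        (cc * (s : ZMod m₁) * (((u⁻¹ : (ZMod m₁)ˣ) : ZMod m₁) - 1))) =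
        SemidirectProduct.inl (1 : Multiplicative (ZMod m₁)))
    simpa using congrArg Multiplicative.toAdd this
  have hB : ((u⁻¹ : (ZMod m₁)ˣ) : ZMod m₁) * (r : ZMod m₁) = 1 := by
    rw [← huval, ← Units.val_mul, inv_mul_cancel, Units.val_one]
  have hs1eq : (s : ZMod m₁) * (1 - (r : ZMod m₁)) = 0 := by
    linear_combination (v * (r : ZMod m₁)) * e +
      (-(s : ZMod m₁) * (((u⁻¹ : (ZMod m₁)ˣ) : ZMod m₁) * (r : ZMod m₁) - 1) - (s : ZMod m₁) +
        (s : ZMod m₁) * (r : ZMod m₁)) * hccv + (-(s : ZMod m₁)) * hB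
  have hdvds : (m₁ : ℤ) ∣ (s : ℤ) * (1 - r) := by
    have h0 : (((s : ℤ) * (1 - r) : ℤ) : ZMod m₁) = 0 := by push_cast; exact_mod_cast hs1eq
    exact (ZMod.intCast_zmod_eq_zero_iff_dvd _ _).mp h0
  have hcop : IsCoprime ((m₁ : ℤ)) (r - 1) :=
    IsCoprime.of_isCoprime_of_dvd_left hco2 (Int.natCast_dvd_natCast.mpr hm1)
  have hsd : (m₁ : ℤ) ∣ (s : ℤ) := by
    refine hcop.dvd_of_dvd_mul_right ?_
    have : (s : ℤ) * (r - 1) = -((s : ℤ) * (1 - r)) := by ring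
    rw [this]
    exact dvd_neg.mpr hdvds
  have hszero : s = 0 :=
    Nat.eq_zero_of_dvd_of_lt (Int.natCast_dvd_natCast.mp hsd) hs |>.symm ▸ rfl
  refine ⟨hszero, ?_⟩
  have hv1 : v = 1 := by
    have := hccv
    rw [hcc1, one_mul] at this
    exact this
  have hrn1 : ((r : ZMod m₁)) ^ n₁ = 1 := by
    rw [← huval, ← Units.val_pow_eq_pow_val, ← hv]
    exact hv1
  have h0 : ((r ^ n₁ - 1 : ℤ) : ZMod m₁) = 0 := by
    push_cast
    rw [sub_eq_zero]
    exact_mod_cast hrn1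
  exact (ZMod.intCast_zmod_eq_zero_iff_dvd _ _).mp h0
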